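/- Let X be a Delone set in ℝ^d whose generated additive subgroup [X] is free of finite rank s with ℤ-basis v₁,…,v_s and associated address map φ : [X] → ℤ^s, and suppose φ is almost linear on X: there exist a linear map L : ℝ^d → ℝ^s and C > 0 such that ‖φ(x) − L x‖ ≤ C for all x ∈ X. Then X is a Meyer set, i.e. X − X is uniformly discrete: there exists ε > 0 such that any two distinct points of X − X are at distance ≥ ε. -/

import Mathlib

open scoped Pointwise

noncomputable section


open scoped Pointwise

noncomputable section

/-- `X` is uniformly discrete with parameter `r`: distinct points are at distance `≥ 2r`. -/
def UnifDiscrete {d : ℕ} (X : Set (EuclideanSpace ℝ (Fin d))) (r : ℝ) : Prop :=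
  ∀ x ∈ X, ∀ y ∈ X, x ≠ y → 2 * r ≤ dist x y

/-- `X` is relatively dense with parameter `R`: every closed ball of radius `R` meets `X`. -/
def RelDense {d : ℕ} (X : Set (EuclideanSpace ℝ (Fin d))) (R : ℝ) : Prop :=
  ∀ z : EuclideanSpace ℝ (Fin d), ∃ x ∈ X, dist z x ≤ R

/-- `X` is a Delone set. -/
def IsDelone {d : ℕ} (X : Set (EuclideanSpace ℝ (Fin d))) : Prop :=
  (∃ r > 0, UnifDiscrete X r) ∧ (∃ R > 0, RelDense X R)

/-- The address map associated to a free `ℤ`-basis of the subgroup `[X]` generated by `X`: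
it sends `Σᵢ nᵢ vᵢ` to the coordinate vector `(n₁,…,n_s)`, viewed in `ℝ^s`. -/
def address {d s : ℕ} {X : Set (EuclideanSpace ℝ (Fin d))}
    (b : Module.Basis (Fin s) ℤ (AddSubgroup.closure X)) (x : AddSubgroup.closure X) :
    EuclideanSpace ℝ (Fin s) := WithLp.toLp 2 (fun i => (b.repr x i : ℝ))

/-- Coordinates are bounded by the Euclidean norm. -/
lemma abs_coord_le_norm {s : ℕ} (x : EuclideanSpace ℝ (Fin s)) (i : Fin s) :
    |x i| ≤ ‖x‖ := by
  rw [EuclideanSpace.norm_eq]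
  have h1 : |x i| = Real.sqrt (‖x i‖ ^ 2) := by
    rw [Real.sqrt_sq_eq_abs]; simp [Real.norm_eq_abs, abs_abs]
  rw [h1]
  apply Real.sqrt_le_sqrt
  exact Finset.single_le_sum (f := fun j => ‖x j‖ ^ 2)
    (fun j _ => by positivity) (Finset.mem_univ i)

/-- address is additive in the obvious ways. -/
lemma address_sub {d s : ℕ} {X : Set (EuclideanSpace ℝ (Fin d))}
    (b : Module.Basis (Fin s) ℤ (AddSubgroup.closure X)) (p q : AddSubgroup.closure X) :
    address b (p - q) = address b p - address b q := by
  ext i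
  simp [address, map_sub, Finsupp.sub_apply]

lemma address_add {d s : ℕ} {X : Set (EuclideanSpace ℝ (Fin d))}
    (b : Module.Basis (Fin s) ℤ (AddSubgroup.closure X)) (p q : AddSubgroup.closure X) :
    address b (p + q) = address b p + address b q := by
  ext i
  simp [address, map_add, Finsupp.add_apply]

/-- A finite set on which `f` is positive admits a uniform positive lower bound. -/
lemma exists_pos_lb_of_finite {α : Type*} {S : Set α} (hS : S.Finite) (f : α → ℝ)
    (hf : ∀ x ∈ S, 0 < f x) : ∃ ε > 0, ∀ x ∈ S, ε ≤ f x := by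
  classical
  revert hf
  refine Set.Finite.induction_on
    (motive := fun T _ => (∀ x ∈ T, 0 < f x) → ∃ ε > 0, ∀ x ∈ T, ε ≤ f x) S hS ?_ ?_
  · exact fun _ => ⟨1, one_pos, fun x hx => absurd hx (Set.notMem_empty x)⟩
  · intro a S' _ _ ih hf
    obtain ⟨ε, hε, hle⟩ := ih fun x hx => hf x (Set.mem_insert_of_mem a hx)
    have hfa : 0 < f a := hf a (Set.mem_insert a S')
    refine ⟨min ε (f a), lt_min hε hfa, fun x hx => ?_⟩
    rcases hx with rfl | hx
    · exact min_le_right _ _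
    · exact le_trans (min_le_left _ _) (hle x hx)

/-- If the subgroup generated by a Delone set `X` is free of finite rank with a basis whose
associated address map is almost linear on `X`, then `X` is a Meyer set, i.e. `X − X` is
uniformly discrete. -/
theorem address_almost_linear_meyer {d s : ℕ} (X : Set (EuclideanSpace ℝ (Fin d)))
    (hX : IsDelone X) (b : Module.Basis (Fin s) ℤ (AddSubgroup.closure X))
    (L : EuclideanSpace ℝ (Fin d) →ₗ[ℝ] EuclideanSpace ℝ (Fin s)) (C : ℝ) (hC : 0 < C)
    (halm : ∀ x (hx : x ∈ X),
      ‖address b ⟨x, AddSubgroup.subset_closure hx⟩ - L x‖ ≤ C) :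
    ∃ ε > 0, ∀ u ∈ X - X, ∀ w ∈ X - X, u ≠ w → ε ≤ dist u w := by
  classical
  set L' : EuclideanSpace ℝ (Fin d) →L[ℝ] EuclideanSpace ℝ (Fin s) :=
    LinearMap.toContinuousLinearMap L with hL'
  set M : ℝ := 4 * C + ‖L'‖ with hM
  -- the finite bad set
  set S : Set (AddSubgroup.closure X) := {v : AddSubgroup.closure X | ‖address b v‖ ≤ M ∧ v ≠ 0} with hS
  have hSfin : S.Finite := by
    have hinj : Function.Injective
        (fun v : AddSubgroup.closure X => fun i => b.repr v i) := by
      intro v w h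
      apply b.repr.injective
      ext i
      exact congrFun h i
    have hsub : S ⊆ (fun v : AddSubgroup.closure X => fun i => b.repr v i) ⁻¹'
        (Set.univ.pi fun _ : Fin s => Set.Icc (-⌈M⌉) ⌈M⌉) := by
      intro v hv
      intro i _
      have h1 : |(b.repr v i : ℝ)| ≤ M := le_trans (abs_coord_le_norm (address b v) i) (hS ▸ hv).1
      have h2 : (b.repr v i : ℝ) ≤ (⌈M⌉ : ℝ) := le_trans (le_abs_self _) (h1.trans (Int.le_ceil M))
      have h3 : -(⌈M⌉ : ℝ) ≤ (b.repr v i : ℝ) := by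
        have := neg_abs_le ((b.repr v i : ℝ))
        have h4 : -(⌈M⌉ : ℝ) ≤ -|(b.repr v i : ℝ)| := by
          apply neg_le_neg; exact h1.trans (Int.le_ceil M)
        linarith
      constructor
      · exact_mod_cast h3
      · exact_mod_cast h2
    exact Set.Finite.subset
      (Set.Finite.preimage hinj.injOn (Set.Finite.pi fun _ => Set.finite_Icc _ _)) hsub
  have hpos : ∀ v ∈ S, 0 < ‖v‖ := fun v hv => norm_pos_iff.mpr (hS ▸ hv).2
  obtain ⟨ε₀, hε₀, hlb⟩ := exists_pos_lb_of_finite hSfin (fun v => ‖v‖) hpos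
  refine ⟨min 1 ε₀, lt_min one_pos hε₀, ?_⟩
  rintro u hu w hw huw
  rcases le_or_gt 1 (dist u w) with h1 | h1
  · exact le_trans (min_le_left _ _) h1
  -- the small-distance case
  obtain ⟨x₁, hx₁, y₁, hy₁, rfl⟩ := hu
  obtain ⟨x₂, hx₂, y₂, hy₂, rfl⟩ := hw
  set a₁ : AddSubgroup.closure X := ⟨x₁, AddSubgroup.subset_closure hx₁⟩
  set c₁ : AddSubgroup.closure X := ⟨y₁, AddSubgroup.subset_closure hy₁⟩
  set a₂ : AddSubgroup.closure X := ⟨x₂, AddSubgroup.subset_closure hx₂⟩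
  set c₂ : AddSubgroup.closure X := ⟨y₂, AddSubgroup.subset_closure hy₂⟩
  set v : AddSubgroup.closure X := a₁ - c₁ - a₂ + c₂ with hv
  have hvcoe : (v : EuclideanSpace ℝ (Fin d)) = (x₁ - y₁) - (x₂ - y₂) := by
    simp [hv, a₁, c₁, a₂, c₂]
    abel
  have hvne : v ≠ 0 := by
    intro h
    apply huw
    have : (v : EuclideanSpace ℝ (Fin d)) = 0 := by rw [h]; rfl
    rw [hvcoe] at this
    exact sub_eq_zero.mp this
  -- bound the address of v
  have haddr : ‖address b v‖ ≤ M := by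
    have hLv : L ((x₁ - y₁) - (x₂ - y₂)) = (L x₁ - L y₁) - (L x₂ - L y₂) := by
      simp [map_sub]
    have key : address b v - L ((x₁ - y₁) - (x₂ - y₂)) =
        ((address b a₁ - L x₁) - (address b c₁ - L y₁)) -
        ((address b a₂ - L x₂) - (address b c₂ - L y₂)) := by
      rw [hv, address_add, address_sub, address_sub, hLv]
      abel
    have hnorm4 : ‖address b v - L ((x₁ - y₁) - (x₂ - y₂))‖ ≤ 4 * C := by
      rw [key]
      calc ‖((address b a₁ - L x₁) - (address b c₁ - L y₁)) -
            ((address b a₂ - L x₂) - (address b c₂ - L y₂))‖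
          ≤ ‖(address b a₁ - L x₁) - (address b c₁ - L y₁)‖ +
            ‖(address b a₂ - L x₂) - (address b c₂ - L y₂)‖ := norm_sub_le _ _
        _ ≤ (‖address b a₁ - L x₁‖ + ‖address b c₁ - L y₁‖) +
            (‖address b a₂ - L x₂‖ + ‖address b c₂ - L y₂‖) :=
            add_le_add (norm_sub_le _ _) (norm_sub_le _ _)
        _ ≤ (C + C) + (C + C) := by
            gcongr
            exacts [halm x₁ hx₁, halm y₁ hy₁, halm x₂ hx₂, halm y₂ hy₂]
        _ = 4 * C := by ring
    have hLbound : ‖L ((x₁ - y₁) - (x₂ - y₂))‖ ≤ ‖L'‖ := by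
      have h0 : ‖L' ((x₁ - y₁) - (x₂ - y₂))‖ ≤ ‖L'‖ * ‖(x₁ - y₁) - (x₂ - y₂)‖ :=
        L'.le_opNorm _
      have hdist : ‖(x₁ - y₁) - (x₂ - y₂)‖ = dist (x₁ - y₁) (x₂ - y₂) :=
        (dist_eq_norm _ _).symm
      have h2 : ‖L'‖ * ‖(x₁ - y₁) - (x₂ - y₂)‖ ≤ ‖L'‖ * 1 := by
        apply mul_le_mul_of_nonneg_left _ (norm_nonneg _)
        rw [hdist]; exact le_of_lt h1
      have : L' ((x₁ - y₁) - (x₂ - y₂)) = L ((x₁ - y₁) - (x₂ - y₂)) := rfl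
      rw [this] at h0
      linarith
    calc ‖address b v‖
        ≤ ‖address b v - L ((x₁ - y₁) - (x₂ - y₂))‖ + ‖L ((x₁ - y₁) - (x₂ - y₂))‖ := by
          have h3 : address b v =
              (address b v - L ((x₁ - y₁) - (x₂ - y₂))) + L ((x₁ - y₁) - (x₂ - y₂)) := by
            abel
          calc ‖address b v‖ = ‖(address b v - L ((x₁ - y₁) - (x₂ - y₂))) +
                L ((x₁ - y₁) - (x₂ - y₂))‖ := by rw [← h3]
            _ ≤ _ := norm_add_le _ _
      _ ≤ 4 * C + ‖L'‖ := add_le_add hnorm4 hLbound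
      _ = M := hM.symm
  have hvS : v ∈ S := ⟨haddr, hvne⟩
  have := hlb v hvS
  have hnv : ‖v‖ = dist (x₁ - y₁) (x₂ - y₂) := by
    rw [AddSubgroup.coe_norm, hvcoe, dist_eq_norm]
  calc min 1 ε₀ ≤ ε₀ := min_le_right _ _
    _ ≤ ‖v‖ := this
    _ = dist (x₁ - y₁) (x₂ - y₂) := hnv
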